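/- Let κ be a BDF on T^d with depth D. If x1 and x2 are chosen independently and uniformly at random in the κ-ball of radius ε, then liminf_{ε→0} P[κ(x1 − x2) ≤ 2ε] > 0. -/

import Mathlib

open MeasureTheory
open scoped ENNReal

/-- Syntax tree for Boolean Distance Functions on the `d`-dimensional torus:
leaves are single coordinates, inner nodes are max or min combinations. -/
inductive BDFTree (d : ℕ) : Type
  | leaf : Fin d → BDFTree d
  | bmax : BDFTree d → BDFTree d → BDFTree d
  | bmin : BDFTree d → BDFTree d → BDFTree d

namespace BDFTree

variable {d : ℕ}

/-- The set of coordinates appearing in the tree. -/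
def leafSet : BDFTree d → Finset (Fin d)
  | leaf i => {i}
  | bmax t₁ t₂ => t₁.leafSet ∪ t₂.leafSet
  | bmin t₁ t₂ => t₁.leafSet ∪ t₂.leafSet

/-- Each inner node splits its coordinates into two disjoint nonoverlapping parts. -/
def Proper : BDFTree d → Prop
  | leaf _ => True
  | bmax t₁ t₂ => Disjoint t₁.leafSet t₂.leafSet ∧ t₁.Proper ∧ t₂.Proper
  | bmin t₁ t₂ => Disjoint t₁.leafSet t₂.leafSet ∧ t₁.Proper ∧ t₂.Proper

/-- `t` represents a Boolean Distance Function on `T^d`: every coordinate of `[d]`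
is used exactly once. -/
def IsBDF (t : BDFTree d) : Prop := t.Proper ∧ t.leafSet = Finset.univ

/-- Evaluation of the Boolean Distance Function at a point of the torus
`T^d = (ℝ/ℤ)^d`; on a one-coordinate leaf it is the torus distance `|x_i|_T = ‖x i‖`. -/
noncomputable def eval : BDFTree d → (Fin d → AddCircle (1 : ℝ)) → ℝ
  | leaf i, x => ‖x i‖
  | bmax t₁ t₂, x => max (t₁.eval x) (t₂.eval x)
  | bmin t₁ t₂, x => min (t₁.eval x) (t₂.eval x)

/-- The depth of a Boolean Distance Function. -/
def depth : BDFTree d → ℕ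
  | leaf _ => 1
  | bmax t₁ t₂ => t₁.depth + t₂.depth
  | bmin t₁ t₂ => min t₁.depth t₂.depth

/-- Single-Coordinate Outer-Max Boolean Distance Functions. -/
def SCOM : BDFTree d → Prop
  | leaf _ => True
  | bmax t₁ t₂ => (∃ i, t₁ = leaf i) ∨ (∃ i, t₂ = leaf i)
  | bmin _ _ => False

/-- `V_κ(r)`: the Haar (Lebesgue) volume of the ball of radius `r` around `0`. -/
noncomputable def ballVol (t : BDFTree d) (r : ℝ) : ℝ≥0∞ :=
  volume {x : Fin d → AddCircle (1 : ℝ) | t.eval x < r}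

/-- There is a set `S` of `depth t` coordinates whose max-norm dominates `eval t`. -/
lemma exists_good_finset (t : BDFTree d) (ht : t.Proper) :
    ∃ S : Finset (Fin d), S ⊆ t.leafSet ∧ S.card = t.depth ∧
      ∀ (x : Fin d → AddCircle (1 : ℝ)) (c : ℝ), (∀ i ∈ S, ‖x i‖ < c) → t.eval x < c := by
  induction t with
  | leaf i =>
      exact ⟨{i}, Finset.Subset.refl _, by simp [depth],
        fun x c h => h i (Finset.mem_singleton_self i)⟩
  | bmax t₁ t₂ ih₁ ih₂ =>
      obtain ⟨hdis, h₁, h₂⟩ := ht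
      obtain ⟨S₁, hS₁l, hS₁c, hS₁⟩ := ih₁ h₁
      obtain ⟨S₂, hS₂l, hS₂c, hS₂⟩ := ih₂ h₂
      refine ⟨S₁ ∪ S₂, Finset.union_subset_union hS₁l hS₂l, ?_, ?_⟩
      · rw [Finset.card_union_of_disjoint (hdis.mono hS₁l hS₂l), hS₁c, hS₂c]; rfl
      · intro x c h
        exact max_lt (hS₁ x c fun i hi => h i (Finset.mem_union_left _ hi))
          (hS₂ x c fun i hi => h i (Finset.mem_union_right _ hi))
  | bmin t₁ t₂ ih₁ ih₂ =>
      obtain ⟨hdis, h₁, h₂⟩ := ht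
      obtain ⟨S₁, hS₁l, hS₁c, hS₁⟩ := ih₁ h₁
      obtain ⟨S₂, hS₂l, hS₂c, hS₂⟩ := ih₂ h₂
      rcases le_total t₁.depth t₂.depth with hle | hle
      · refine ⟨S₁, hS₁l.trans (Finset.subset_union_left), ?_, fun x c h =>
          lt_of_le_of_lt (min_le_left _ _) (hS₁ x c h)⟩
        rw [hS₁c]; exact (min_eq_left hle).symm
      · refine ⟨S₂, hS₂l.trans (Finset.subset_union_right), ?_, fun x c h =>
          lt_of_le_of_lt (min_le_right _ _) (hS₂ x c h)⟩
        rw [hS₂c]; exact (min_eq_right hle).symm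

/-- The ball `{eval t < c}` is covered by finitely many "max-norm" boxes, each
on at least `depth t` coordinates. -/
lemma exists_cover_family (t : BDFTree d) (ht : t.Proper) :
    ∃ 𝒮 : Finset (Finset (Fin d)), (∀ S ∈ 𝒮, S ⊆ t.leafSet ∧ t.depth ≤ S.card) ∧
      ∀ (x : Fin d → AddCircle (1 : ℝ)) (c : ℝ), t.eval x < c →
        ∃ S ∈ 𝒮, ∀ i ∈ S, ‖x i‖ < c := by
  induction t with
  | leaf i =>
      refine ⟨{{i}}, ?_, ?_⟩
      · intro S hS; simp only [Finset.mem_singleton] at hS; subst hS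
        exact ⟨Finset.Subset.refl _, by simp [depth]⟩
      · intro x c h
        exact ⟨{i}, Finset.mem_singleton_self _, by simpa [eval] using h⟩
  | bmax t₁ t₂ ih₁ ih₂ =>
      obtain ⟨hdis, h₁, h₂⟩ := ht
      obtain ⟨𝒮₁, h𝒮₁, hc₁⟩ := ih₁ h₁
      obtain ⟨𝒮₂, h𝒮₂, hc₂⟩ := ih₂ h₂
      refine ⟨Finset.image₂ (· ∪ ·) 𝒮₁ 𝒮₂, ?_, ?_⟩
      · intro S hS
        obtain ⟨S₁, hS₁, S₂, hS₂, rfl⟩ := Finset.mem_image₂.mp hS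
        obtain ⟨hl₁, hd₁⟩ := h𝒮₁ S₁ hS₁
        obtain ⟨hl₂, hd₂⟩ := h𝒮₂ S₂ hS₂
        refine ⟨Finset.union_subset_union hl₁ hl₂, ?_⟩
        rw [Finset.card_union_of_disjoint (hdis.mono hl₁ hl₂)]
        exact add_le_add hd₁ hd₂
      · intro x c h
        rw [eval, max_lt_iff] at h
        obtain ⟨S₁, hS₁, hb₁⟩ := hc₁ x c h.1
        obtain ⟨S₂, hS₂, hb₂⟩ := hc₂ x c h.2
        refine ⟨S₁ ∪ S₂, Finset.mem_image₂_of_mem hS₁ hS₂, ?_⟩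
        intro i hi
        rcases Finset.mem_union.mp hi with hi | hi
        exacts [hb₁ i hi, hb₂ i hi]
  | bmin t₁ t₂ ih₁ ih₂ =>
      obtain ⟨hdis, h₁, h₂⟩ := ht
      obtain ⟨𝒮₁, h𝒮₁, hc₁⟩ := ih₁ h₁
      obtain ⟨𝒮₂, h𝒮₂, hc₂⟩ := ih₂ h₂
      refine ⟨𝒮₁ ∪ 𝒮₂, ?_, ?_⟩
      · intro S hS
        rcases Finset.mem_union.mp hS with hS | hS
        · exact ⟨(h𝒮₁ S hS).1.trans Finset.subset_union_left,
            le_trans (min_le_left _ _) (h𝒮₁ S hS).2⟩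
        · exact ⟨(h𝒮₂ S hS).1.trans Finset.subset_union_right,
            le_trans (min_le_right _ _) (h𝒮₂ S hS).2⟩
      · intro x c h
        rw [eval, min_lt_iff] at h
        rcases h with h | h
        · obtain ⟨S, hS, hb⟩ := hc₁ x c h
          exact ⟨S, Finset.mem_union_left _ hS, hb⟩
        · obtain ⟨S, hS, hb⟩ := hc₂ x c h
          exact ⟨S, Finset.mem_union_right _ hS, hb⟩

end BDFTree

/-- Volume of a "max-norm" box on the coordinates of `S`. -/
lemma bdf_cube_volume (d : ℕ) (S : Finset (Fin d)) (ε : ℝ) :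
    volume {x : Fin d → AddCircle (1 : ℝ) | ∀ i ∈ S, ‖x i‖ < ε}
      = (volume {y : AddCircle (1 : ℝ) | ‖y‖ < ε}) ^ S.card := by
  have hset : {x : Fin d → AddCircle (1 : ℝ) | ∀ i ∈ S, ‖x i‖ < ε}
      = Set.pi Set.univ (fun i => if i ∈ S then {y : AddCircle (1 : ℝ) | ‖y‖ < ε}
          else Set.univ) := by
    ext x
    simp only [Set.mem_setOf_eq, Set.mem_univ_pi]
    refine forall_congr' fun i => ?_
    split_ifs with h <;> simp [h]
  rw [hset, volume_pi_pi]
  have : ∀ i : Fin d,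
      volume (if i ∈ S then {y : AddCircle (1 : ℝ) | ‖y‖ < ε} else Set.univ)
        = if i ∈ S then volume {y : AddCircle (1 : ℝ) | ‖y‖ < ε} else 1 := by
    intro i; split_ifs with h
    · rfl
    · simp
  simp_rw [this]
  rw [Finset.prod_ite_mem, Finset.univ_inter, Finset.prod_const]

lemma bdf_circle_ball_lb {ε : ℝ} (h0 : 0 < ε) (h1 : ε < 1/2) :
    ENNReal.ofReal ε ≤ volume {y : AddCircle (1 : ℝ) | ‖y‖ < ε} := by
  have hsub : Metric.closedBall (0 : AddCircle (1:ℝ)) (ε/2)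
      ⊆ {y : AddCircle (1:ℝ) | ‖y‖ < ε} := by
    intro y hy
    rw [Metric.mem_closedBall, dist_zero_right] at hy
    exact lt_of_le_of_lt hy (by linarith)
  calc ENNReal.ofReal ε = volume (Metric.closedBall (0 : AddCircle (1:ℝ)) (ε/2)) := by
        rw [AddCircle.volume_closedBall]
        congr 1
        rw [min_eq_right (by linarith)]
        ring
    _ ≤ _ := measure_mono hsub

lemma bdf_circle_ball_ub {ε : ℝ} :
    volume {y : AddCircle (1 : ℝ) | ‖y‖ < ε} ≤ ENNReal.ofReal (2 * ε) := by
  have hsub : {y : AddCircle (1:ℝ) | ‖y‖ < ε}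
      ⊆ Metric.closedBall (0 : AddCircle (1:ℝ)) ε := by
    intro y hy
    rw [Metric.mem_closedBall, dist_zero_right]
    exact le_of_lt hy
  calc volume {y : AddCircle (1:ℝ) | ‖y‖ < ε}
      ≤ volume (Metric.closedBall (0 : AddCircle (1:ℝ)) ε) := measure_mono hsub
    _ ≤ ENNReal.ofReal (2 * ε) := by
        rw [AddCircle.volume_closedBall]
        exact ENNReal.ofReal_le_ofReal (min_le_right _ _)

lemma bdf_pow_le_pow_of_le_one {a : ℝ≥0∞} (ha : a ≤ 1) {m n : ℕ} (h : m ≤ n) :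
    a ^ n ≤ a ^ m := by
  calc a ^ n = a ^ m * a ^ (n - m) := by rw [← pow_add]; congr 1; omega
    _ ≤ a ^ m * 1 := mul_le_mul_right (pow_le_one' ha _) _
    _ = a ^ m := mul_one _

open Filter

/-- For two independent uniform points of the `ε`-ball, the probability that
their difference lies within distance `2ε` has positive liminf as `ε → 0`. -/
theorem bdf_liminf_prob_close_pos {d : ℕ} (t : BDFTree d) (ht : t.IsBDF) :
    0 < Filter.liminf (fun ε : ℝ =>
        volume {p : (Fin d → AddCircle (1 : ℝ)) × (Fin d → AddCircle (1 : ℝ)) |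
            t.eval p.1 < ε ∧ t.eval p.2 < ε ∧ t.eval (p.1 - p.2) ≤ 2 * ε}
          / (t.ballVol ε * t.ballVol ε))
      (nhdsWithin 0 (Set.Ioi 0)) := by
  obtain ⟨htp, -⟩ := ht
  obtain ⟨S, hSl, hScard, hSbound⟩ := BDFTree.exists_good_finset t htp
  obtain ⟨𝒮, h𝒮, hcover⟩ := BDFTree.exists_cover_family t htp
  set D := t.depth with hD
  set N := 𝒮.card with hN
  set K : ℝ≥0∞ := (N : ℝ≥0∞) ^ 2 * 2 ^ (2 * D) with hK
  have hKne : K ≠ ∞ := by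
    apply ENNReal.mul_ne_top <;> exact ENNReal.pow_ne_top (by simp)
  have hpos : (0 : ℝ≥0∞) < 1 / K := ENNReal.div_pos one_ne_zero hKne
  refine lt_of_lt_of_le hpos (Filter.le_liminf_of_le (by isBoundedDefault) ?_)
  filter_upwards [Ioo_mem_nhdsGT_of_mem
    (by norm_num : (0:ℝ) ∈ Set.Ico (0:ℝ) (1/2))] with ε hε
  obtain ⟨hε0, hε1⟩ := hε
  set v := volume {y : AddCircle (1 : ℝ) | ‖y‖ < ε} with hv
  have hub : v ≤ ENNReal.ofReal (2 * ε) := bdf_circle_ball_ub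
  have hv1 : v ≤ 1 := hub.trans (ENNReal.ofReal_le_one.mpr (by linarith))
  set Q : Set (Fin d → AddCircle (1 : ℝ)) := {x | ∀ i ∈ S, ‖x i‖ < ε} with hQ
  -- numerator lower bound
  have hnum : v ^ D * v ^ D ≤
      volume {p : (Fin d → AddCircle (1 : ℝ)) × (Fin d → AddCircle (1 : ℝ)) |
        t.eval p.1 < ε ∧ t.eval p.2 < ε ∧ t.eval (p.1 - p.2) ≤ 2 * ε} := by
    have hsub : Q ×ˢ Q ⊆ {p : (Fin d → AddCircle (1 : ℝ)) × (Fin d → AddCircle (1 : ℝ)) |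
        t.eval p.1 < ε ∧ t.eval p.2 < ε ∧ t.eval (p.1 - p.2) ≤ 2 * ε} := by
      rintro ⟨x, y⟩ ⟨hx, hy⟩
      refine ⟨hSbound x ε hx, hSbound y ε hy, le_of_lt ?_⟩
      refine hSbound (x - y) (2 * ε) fun i hi => ?_
      calc ‖(x - y) i‖ = ‖x i - y i‖ := by rw [Pi.sub_apply]
        _ ≤ ‖x i‖ + ‖y i‖ := norm_sub_le _ _
        _ < ε + ε := add_lt_add (hx i hi) (hy i hi)
        _ = 2 * ε := by ring
    calc v ^ D * v ^ D = volume (Q ×ˢ Q) := by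
          rw [Measure.volume_eq_prod, Measure.prod_prod, hQ, bdf_cube_volume, hScard]
      _ ≤ _ := measure_mono hsub
  -- denominator upper bound
  have hden : t.ballVol ε ≤ (N : ℝ≥0∞) * ENNReal.ofReal (2 * ε) ^ D := by
    have hsub : {x : Fin d → AddCircle (1 : ℝ) | t.eval x < ε}
        ⊆ ⋃ S' ∈ 𝒮, {x : Fin d → AddCircle (1 : ℝ) | ∀ i ∈ S', ‖x i‖ < ε} := by
      intro x hx
      obtain ⟨S', hS', hb⟩ := hcover x ε hx
      exact Set.mem_biUnion hS' hb
    calc t.ballVol ε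
        ≤ ∑ S' ∈ 𝒮, volume {x : Fin d → AddCircle (1 : ℝ) | ∀ i ∈ S', ‖x i‖ < ε} :=
          (measure_mono hsub).trans (measure_biUnion_finset_le 𝒮 _)
      _ ≤ ∑ _S' ∈ 𝒮, ENNReal.ofReal (2 * ε) ^ D := by
          refine Finset.sum_le_sum fun S' hS' => ?_
          rw [bdf_cube_volume]
          exact (bdf_pow_le_pow_of_le_one hv1 (h𝒮 S' hS').2).trans
            (pow_le_pow_left' hub D)
      _ = (N : ℝ≥0∞) * ENNReal.ofReal (2 * ε) ^ D := by
          rw [Finset.sum_const, nsmul_eq_mul, hN]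
  -- combine
  set x := ENNReal.ofReal ε with hx
  have hx0 : x ≠ 0 := (ENNReal.ofReal_pos.mpr hε0).ne'
  have hxt : x ≠ ∞ := ENNReal.ofReal_ne_top
  have hden_eq : ((N : ℝ≥0∞) * ENNReal.ofReal (2 * ε) ^ D)
      * ((N : ℝ≥0∞) * ENNReal.ofReal (2 * ε) ^ D) = K * x ^ (2 * D) := by
    rw [ENNReal.ofReal_mul (by norm_num : (0:ℝ) ≤ 2), ENNReal.ofReal_ofNat 2, hK]
    ring
  have hnum_ge : x ^ (2 * D) ≤ v ^ D * v ^ D := by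
    rw [← pow_add, ← two_mul]
    exact pow_le_pow_left' (bdf_circle_ball_lb hε0 hε1) _
  have hx_ne0 : x ^ (2 * D) ≠ 0 := pow_ne_zero _ hx0
  have hx_net : x ^ (2 * D) ≠ ∞ := ENNReal.pow_ne_top hxt
  calc (1 : ℝ≥0∞) / K = x ^ (2 * D) * 1 / (x ^ (2 * D) * K) := by
        rw [ENNReal.mul_div_mul_left _ _ hx_ne0 hx_net]
    _ = x ^ (2 * D) / (K * x ^ (2 * D)) := by rw [mul_one, mul_comm K _]
    _ ≤ (v ^ D * v ^ D) / (((N : ℝ≥0∞) * ENNReal.ofReal (2 * ε) ^ D)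
          * ((N : ℝ≥0∞) * ENNReal.ofReal (2 * ε) ^ D)) := by
        rw [hden_eq]
        exact ENNReal.div_le_div hnum_ge le_rfl
    _ ≤ _ := ENNReal.div_le_div hnum (mul_le_mul' hden hden)
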